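/- Let p be an odd prime, e ≥ 1, and i, j ∈ {0, …, p^(e-1)-1}. Define s_{i,j} = b_j⁻¹ ∘ a^i ∘ b_j ∈ Sym(ℤ/p^eℤ), where a(x) = (p+1)x and b_j(x) = Σ_{m=0}^{x-1} (p+1)^(mj). Then s_{i,j} is a skew-morphism of ℤ/p^eℤ. -/

import Mathlib

open Finset

lemma geom_block (w : ℤ) (A B : ℕ) :
    ∑ m ∈ range (A * B), w ^ m
      = (∑ k ∈ range A, (w ^ B) ^ k) * ∑ m ∈ range B, w ^ m := by
  induction A with
  | zero => simp
  | succ n ih =>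
      rw [Nat.succ_mul, Finset.sum_range_add, ih, Finset.sum_range_succ, add_mul]
      congr 1
      rw [Finset.mul_sum]
      exact Finset.sum_congr rfl fun x _ => by rw [pow_add, pow_mul']

lemma dvd_geom_sum (p : ℕ) (z : ℤ) (hz : (p:ℤ) ∣ z - 1) (c : ℕ) :
    (p:ℤ)^c ∣ ∑ m ∈ range (p ^ c), z ^ m := by
  induction c with
  | zero => simp
  | succ c ih =>
      have key : ∀ n : ℕ, (p:ℤ) ∣ z ^ n - 1 := by
        intro n
        exact hz.trans (by simpa using sub_dvd_pow_sub_pow z 1 n)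
      rw [pow_succ' p c, geom_block]
      have h1 : (p:ℤ) ∣ ∑ k ∈ range p, (z ^ p ^ c) ^ k := by
        have h2 : ∑ k ∈ range p, (z ^ p ^ c) ^ k
            = (∑ k ∈ range p, ((z ^ p ^ c) ^ k - 1)) + p := by
          rw [Finset.sum_sub_distrib, Finset.sum_const, Finset.card_range]
          ring
        rw [h2]
        refine dvd_add (Finset.dvd_sum fun k _ => ?_) dvd_rfl
        rw [← pow_mul]; exact key _
      rw [pow_succ']
      exact mul_dvd_mul h1 ih

lemma pow_prime_pow_sub_one (p : ℕ) (c : ℕ) :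
    (p:ℤ)^(c+1) ∣ (1 + p) ^ (p ^ c) - 1 := by
  have h := geom_sum_mul (1 + (p:ℤ)) (p ^ c)
  have h2 : (1 + (p:ℤ)) - 1 = p := by ring
  rw [h2] at h
  rw [← h, pow_succ]
  exact mul_dvd_mul (dvd_geom_sum p _ (by simp) c) dvd_rfl

lemma geom_val (p : ℕ) (hp : p.Prime) (hodd : Odd p) (j L f : ℕ) (_hL : 0 < L)
    (hdvd : (p:ℤ)^f ∣ ∑ m ∈ range L, ((1 + (p:ℤ))^j) ^ m) :
    (p:ℤ)^f ∣ (L:ℤ) := by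
  set w : ℤ := (1 + (p:ℤ))^j with hw
  rcases Nat.eq_zero_or_pos j with hj | hj
  · subst hj
    simp only [hw, pow_zero, one_pow, Finset.sum_const, Finset.card_range, nsmul_eq_mul,
      mul_one] at hdvd
    exact_mod_cast hdvd
  have hpI : Prime (p:ℤ) := Nat.prime_iff_prime_int.mp hp
  have hpw : (p:ℤ) ∣ w - 1 := by
    have := sub_dvd_pow_sub_pow (1 + (p:ℤ)) 1 j
    simpa using this
  have hx : ¬ (p:ℤ) ∣ w := by
    intro h
    have : (p:ℤ) ∣ 1 := by
      have := dvd_sub h hpw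
      simpa using this
    exact hpI.not_unit (isUnit_of_dvd_one this)
  have hw1 : w - 1 ≠ 0 := by
    have h1 : (1:ℤ) < 1 + (p:ℤ) := by
      have := hp.two_le; omega
    have : (1:ℤ) < w := one_lt_pow₀ h1 (by omega)
    omega
  have hfin : FiniteMultiplicity (p:ℤ) (w - 1) :=
    Int.finiteMultiplicity_iff.mpr ⟨by simpa using hpI.ne_one, hw1⟩
  have hlte := Int.emultiplicity_pow_sub_pow hp hodd hpw hx L
  have hgeom := geom_sum_mul w L
  have hmul : emultiplicity (p:ℤ) ((∑ m ∈ range L, w ^ m) * (w - 1))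
      = emultiplicity (p:ℤ) (∑ m ∈ range L, w ^ m) + emultiplicity (p:ℤ) (w - 1) :=
    emultiplicity_mul hpI
  rw [hgeom] at hmul
  rw [one_pow] at hlte
  rw [hmul, ← Int.natCast_emultiplicity] at hlte
  have hcancel : emultiplicity (p:ℤ) (∑ m ∈ range L, w ^ m)
      = emultiplicity (p:ℤ) (L:ℤ) := by
    have h' := hlte
    rw [add_comm (emultiplicity (p:ℤ) (w-1))] at h'
    exact WithTop.add_right_cancel (finiteMultiplicity_iff_emultiplicity_ne_top.mp hfin) h'
  rw [pow_dvd_iff_le_emultiplicity, hcancel, ← pow_dvd_iff_le_emultiplicity] at hdvd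
  exact hdvd


/-- A bijection `f` of `ℤ/nℤ` is a skew-morphism if `f 0 = 0` and there is a
power function `π` with `f (x+y) = f x + f^(π x) y` for all `x, y`. -/
def IsSkewMorphism {n : ℕ} (f : Equiv.Perm (ZMod n)) : Prop :=
  f 0 = 0 ∧ ∃ π : ZMod n → ℤ, ∀ x y : ZMod n, f (x + y) = f x + (f ^ π x) y

/-- `s_{i,j} = b_j⁻¹ ∘ a^i ∘ b_j` is a skew-morphism of `ℤ/p^eℤ`, where
`a x = (p+1) x` and `b_j x = Σ_{m < x} (p+1)^(m·j)`. -/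
theorem stmt_10 (p e : ℕ) (hp : p.Prime) (hodd : Odd p) (he : 1 ≤ e)
    (i j : ℕ) (hi : i < p ^ (e - 1)) (hj : j < p ^ (e - 1))
    (a : Equiv.Perm (ZMod (p ^ e))) (ha : ∀ w : ZMod (p ^ e), a w = (p + 1) * w)
    (b : Equiv.Perm (ZMod (p ^ e)))
    (hb : ∀ x : ZMod (p ^ e),
      b x = ∑ m ∈ Finset.range x.val, ((p : ZMod (p ^ e)) + 1) ^ (m * j)) :
    IsSkewMorphism (b⁻¹ * a ^ i * b) := by
  rcases eq_or_ne i 0 with rfl | hi0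
  · have hid : ∀ z : ZMod (p ^ e), (b⁻¹ * a ^ 0 * b) z = z := by
      intro z
      simp [Equiv.Perm.mul_apply]
    refine ⟨hid 0, fun _ => 1, fun x y => ?_⟩
    rw [zpow_one, hid, hid, hid]
  have h2 := hp.two_le
  have hq1 : 1 < p ^ e := Nat.one_lt_pow (by omega) (by omega)
  haveI : NeZero (p ^ e) := ⟨by omega⟩
  set u : ZMod (p ^ e) := (p : ZMod (p ^ e)) + 1 with hu
  set w : ℤ := (1 + (p:ℤ)) ^ j with hw
  -- basic casts
  have hBcast : ∀ n : ℕ, ((∑ m ∈ range n, w ^ m : ℤ) : ZMod (p ^ e)) = ∑ m ∈ range n, u ^ (m * j) := by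
    intro n
    push_cast
    refine Finset.sum_congr rfl fun m _ => ?_
    rw [hw]
    push_cast
    rw [← pow_mul, mul_comm j m, add_comm]
  -- the order fact
  have horder : u ^ (p ^ (e - 1)) = 1 := by
    have h := pow_prime_pow_sub_one p (e - 1)
    rw [show e - 1 + 1 = e from by omega] at h
    have h0 : (((1 + (p:ℤ)) ^ (p ^ (e-1)) - 1 : ℤ) : ZMod (p ^ e)) = 0 := by
      rw [ZMod.intCast_zmod_eq_zero_iff_dvd]
      exact_mod_cast h
    push_cast at h0
    rw [sub_eq_zero] at h0
    rw [← h0, hu]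
    ring
  have hordj : ∀ c : ℕ, p ^ (e-1) ∣ c → u ^ c = 1 := by
    rintro c ⟨d, rfl⟩
    rw [pow_mul, horder, one_pow]
  have hupow_eq : ∀ m n : ℕ, m ≡ n [MOD p ^ (e-1)] → u ^ m = u ^ n := by
    have key : ∀ m n : ℕ, m ≤ n → m ≡ n [MOD p ^ (e-1)] → u ^ m = u ^ n := by
      intro m n hmn h
      obtain ⟨c, hc⟩ := (Nat.modEq_iff_dvd' hmn).mp h
      have : n = m + p ^ (e-1) * c := by omega
      rw [this, pow_add, hordj _ ⟨c, rfl⟩, mul_one]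
    intro m n h
    rcases le_total m n with hmn | hmn
    · exact key m n hmn h
    · exact (key n m hmn h.symm).symm
  -- the wrap-around sum vanishes
  have hqsum : ∑ m ∈ range (p ^ e), u ^ (m * j) = 0 := by
    rw [← hBcast]
    rw [ZMod.intCast_zmod_eq_zero_iff_dvd]
    have := dvd_geom_sum p w (by simpa [hw] using sub_dvd_pow_sub_pow (1+(p:ℤ)) 1 j) e
    exact_mod_cast this
  -- sum splitting
  have hsum : ∀ A B : ℕ, ∑ m ∈ range (A + B), u ^ (m * j)
      = (∑ m ∈ range A, u ^ (m * j)) + u ^ (j * A) * ∑ m ∈ range B, u ^ (m * j) := by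
    intro A B
    rw [Finset.sum_range_add, Finset.mul_sum]
    congr 1
    exact Finset.sum_congr rfl fun m _ => by rw [← pow_add]; ring_nf
  -- the skew product rule for b
  have hstar : ∀ x y : ZMod (p ^ e), b (x + y) = b x + u ^ (j * x.val) * b y := by
    intro x y
    rw [hb, hb, hb]
    rcases Nat.lt_or_ge (x.val + y.val) (p ^ e) with hlt | hge
    · rw [ZMod.val_add, Nat.mod_eq_of_lt hlt, hsum]
    · have hx := ZMod.val_lt x
      have hy := ZMod.val_lt y
      have hv : (x + y).val = x.val + y.val - (p ^ e) := by
        rw [ZMod.val_add, Nat.mod_eq_sub_mod hge, Nat.mod_eq_of_lt (by omega)]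
      have hsplit : x.val + y.val = (p ^ e) + (x.val + y.val - (p ^ e)) := by omega
      have := hsum x.val y.val
      rw [hsplit, hsum (p ^ e) _, hqsum, hordj (j*(p ^ e)) ((pow_dvd_pow p (by omega : e - 1 ≤ e)).mul_left j), zero_add, one_mul, ← hv] at this
      rw [this]
  -- action of powers of a
  have hapow : ∀ (n : ℕ) (z : ZMod (p ^ e)), (a ^ n) z = u ^ n * z := by
    intro n
    induction n with
    | zero => intro z; simp
    | succ n ih =>
        intro z
        rw [pow_succ, Equiv.Perm.mul_apply, ih (a z), ha, pow_succ]
        ring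
  set s := b⁻¹ * a ^ i * b with hs_def
  have hs : ∀ z, b (s z) = u ^ i * b z := by
    intro z
    rw [hs_def]
    simp only [Equiv.Perm.mul_apply, Equiv.Perm.inv_def, Equiv.apply_symm_apply]
    exact hapow i (b z)
  have hspow : ∀ (k : ℕ) (z : ZMod (p ^ e)), b ((s ^ k) z) = u ^ (i * k) * b z := by
    intro k
    induction k with
    | zero => intro z; simp
    | succ k ih =>
        intro z
        rw [pow_succ, Equiv.Perm.mul_apply, ih (s z), hs z, ← mul_assoc, ← pow_add,
          Nat.mul_succ]
  have hb0 : b 0 = 0 := by rw [hb]; simp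
  have hs0 : s 0 = 0 := by
    apply b.injective
    rw [hs, hb0, mul_zero]
  -- gcd bookkeeping
  obtain ⟨t, ht_le, hgt⟩ := (Nat.dvd_prime_pow hp).mp (Nat.gcd_dvd_right i (p ^ (e - 1)))
  have hpt_i : p ^ t ∣ i := hgt ▸ Nat.gcd_dvd_left i (p ^ (e - 1))
  have hti : t + 1 ≤ e - 1 := by
    have h1 : p ^ t ≤ i := Nat.le_of_dvd (Nat.pos_of_ne_zero hi0) hpt_i
    have h3 : p ^ t < p ^ (e - 1) := lt_of_le_of_lt h1 hi
    have := (Nat.pow_lt_pow_iff_right (by omega : 1 < p)).mp h3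
    omega
  have hBi : (p:ℤ) ^ (t + 1) ∣ (1 + (p:ℤ)) ^ i - 1 := by
    obtain ⟨c, rfl⟩ := hpt_i
    have h1 := (pow_prime_pow_sub_one p t).trans
      (by simpa using sub_dvd_pow_sub_pow ((1 + (p:ℤ)) ^ (p ^ t)) 1 c)
    rwa [← pow_mul] at h1
  have hpw : ¬ (p:ℤ) ∣ w := by
    intro h
    have h1 : (p:ℤ) ∣ w - 1 := by
      simpa [hw] using sub_dvd_pow_sub_pow (1 + (p:ℤ)) 1 j
    have : (p:ℤ) ∣ 1 := by
      have := dvd_sub h h1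
      simpa using this
    exact hp.one_lt.ne' (by exact_mod_cast Int.eq_one_of_dvd_one (by positivity) this)
  have hcop : IsCoprime ((p:ℤ) ^ (t + 1)) w :=
    (((Nat.prime_iff_prime_int.mp hp).coprime_iff_not_dvd).mpr hpw).pow_left
  -- the key per-point congruence
  have hkey : ∀ x : ZMod (p ^ e), ∃ k : ℕ,
      i * k + j * (s x).val ≡ i + j * x.val [MOD p ^ (e - 1)] := by
    intro x
    have hdiff : ((p ^ e : ℕ) : ℤ) ∣
        ((∑ m ∈ range (s x).val, w ^ m) - (1 + (p:ℤ)) ^ i * ∑ m ∈ range x.val, w ^ m) := by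
      rw [← ZMod.intCast_zmod_eq_zero_iff_dvd, Int.cast_sub, Int.cast_mul, hBcast, hBcast,
        ← hb, ← hb, hs]
      have hcast : (((1 + (p:ℤ)) ^ i : ℤ) : ZMod (p ^ e)) = u ^ i := by
        push_cast
        rw [hu]
        ring
      rw [hcast, sub_self]
    have hC : (p:ℤ) ^ (t + 1) ∣
        ((∑ m ∈ range (s x).val, w ^ m) - ∑ m ∈ range x.val, w ^ m) := by
      have hdvd_e : (p:ℤ) ^ (t + 1) ∣ ((p ^ e : ℕ) : ℤ) := by
        push_cast
        exact pow_dvd_pow _ (by omega)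
      have h1 := hdvd_e.trans hdiff
      have h2 : (∑ m ∈ range (s x).val, w ^ m) - ∑ m ∈ range x.val, w ^ m
          = ((∑ m ∈ range (s x).val, w ^ m) - (1 + (p:ℤ)) ^ i * ∑ m ∈ range x.val, w ^ m)
            + ((1 + (p:ℤ)) ^ i - 1) * ∑ m ∈ range x.val, w ^ m := by ring
      rw [h2]
      exact dvd_add h1 (hBi.mul_right _)
    -- turn it into divisibility of the difference of values
    have habs : ∀ A B : ℕ, B ≤ A →
        (p:ℤ) ^ (t + 1) ∣ ((∑ m ∈ range A, w ^ m) - ∑ m ∈ range B, w ^ m) →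
        (p:ℤ) ^ (t + 1) ∣ (A : ℤ) - B := by
      intro A B hBA hdvd
      have hsum2 : ∑ m ∈ range A, w ^ m
          = (∑ m ∈ range B, w ^ m) + w ^ B * ∑ m ∈ range (A - B), w ^ m := by
        have h := Finset.sum_range_add (fun m => w ^ m) B (A - B)
        rw [show B + (A - B) = A from by omega] at h
        rw [h, Finset.mul_sum]
        congr 1
        exact Finset.sum_congr rfl fun m _ => by rw [pow_add]
      rcases Nat.eq_or_lt_of_le hBA with heq | hlt
      · simp [heq]
      · have h2 : (p:ℤ) ^ (t + 1) ∣ w ^ B * ∑ m ∈ range (A - B), w ^ m := by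
          rw [hsum2] at hdvd
          simpa using hdvd
        have h3 := (hcop.pow_right).dvd_of_dvd_mul_left h2
        have h4 := geom_val p hp hodd j (A - B) (t + 1) (by omega) h3
        rwa [Nat.cast_sub hBA] at h4
    have hD : (p:ℤ) ^ t ∣ ((s x).val : ℤ) - (x.val : ℤ) := by
      refine (pow_dvd_pow (p:ℤ) (by omega : t ≤ t + 1)).trans ?_
      rcases le_total x.val (s x).val with hle | hle
      · exact habs _ _ hle hC
      · exact dvd_sub_comm.mp (habs _ _ hle (dvd_sub_comm.mp hC))
    -- Bezout / linear congruence
    have hgD : ((Nat.gcd i (p ^ (e - 1)) : ℕ) : ℤ) ∣ (i:ℤ) + j * x.val - j * (s x).val := by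
      have h1 : ((Nat.gcd i (p ^ (e - 1)) : ℕ) : ℤ) ∣ (i:ℤ) :=
        Int.natCast_dvd_natCast.mpr (Nat.gcd_dvd_left _ _)
      have h2 : ((Nat.gcd i (p ^ (e - 1)) : ℕ) : ℤ) ∣ (j:ℤ) * ((x.val:ℤ) - (s x).val) := by
        rw [hgt]
        push_cast
        exact dvd_mul_of_dvd_right (dvd_sub_comm.mp hD) j
      have h3 : (i:ℤ) + j * x.val - j * (s x).val = i + j * ((x.val:ℤ) - (s x).val) := by ring
      rw [h3]
      exact dvd_add h1 h2
    obtain ⟨m, hm⟩ := hgD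
    have hb2 := Nat.gcd_eq_gcd_ab i (p ^ (e - 1))
    set A := Nat.gcdA i (p ^ (e - 1)) with hA
    set Bz := Nat.gcdB i (p ^ (e - 1)) with hBz
    have hN0 : (0:ℤ) < ((p ^ (e - 1) : ℕ) : ℤ) :=
      Int.natCast_pos.mpr (Nat.pow_pos (by omega))
    refine ⟨((A * m) % ((p ^ (e - 1) : ℕ) : ℤ)).toNat, ?_⟩
    set k : ℕ := ((A * m) % ((p ^ (e - 1) : ℕ) : ℤ)).toNat with hk
    have hkK : ((p ^ (e - 1) : ℕ) : ℤ) ∣ A * m - (k:ℤ) := by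
      rw [hk, Int.toNat_of_nonneg (Int.emod_nonneg _ (by omega))]
      refine ⟨(A * m) / ((p ^ (e - 1) : ℕ) : ℤ), ?_⟩
      have h := Int.emod_add_mul_ediv (A * m) ((p ^ (e - 1) : ℕ) : ℤ)
      linarith
    rw [Nat.modEq_iff_dvd]
    have heq : ((i + j * x.val : ℕ) : ℤ) - ((i * k + j * (s x).val : ℕ) : ℤ)
        = (i:ℤ) * (A * m - (k:ℤ)) + ((p ^ (e - 1) : ℕ) : ℤ) * (Bz * m) := by
      push_cast at hm hb2 ⊢
      linear_combination hm + m * hb2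
    rw [heq]
    exact dvd_add (hkK.mul_left _) (dvd_mul_right _ _)
  -- final assembly
  refine ⟨hs0, ?_⟩
  choose k hk using hkey
  refine ⟨fun x => (k x : ℤ), fun x y => ?_⟩
  rw [zpow_natCast]
  apply b.injective
  rw [hs, hstar, hstar, hs, hspow]
  rw [mul_add, ← mul_assoc, ← mul_assoc, ← pow_add, ← pow_add]
  have hexp : u ^ (j * (s x).val + i * k x) = u ^ (i + j * x.val) := by
    rw [add_comm (j * (s x).val)]
    exact hupow_eq _ _ (hk x)
  rw [hexp]
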